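/- For A = {0,1} and any n ≥ 2, the only linear universal partial words for A^n containing two adjacent ◊s, up to reversal and permuting the letters 0 and 1, are ◊◊ (for n = 2) and ◊◊0111 (for n = 3). In particular, for n ≥ 4 no binary linear upword with two adjacent ◊s exists. -/

import Mathlib

/-- A partial-word symbol over the alphabet `Fin α`: `none` is the wildcard `◊`. -/
abbrev PSym (α : ℕ) := Option (Fin α)

/-- The word `v ∈ A^*` appears as a factor of the partial word `u` at 0-based position `i`:
each symbol of `u` in the window is either `◊` or equals the corresponding letter of `v`. -/
def MatchAt {α : ℕ} (u : List (PSym α)) (v : List (Fin α)) (i : ℕ) : Prop :=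
  i + v.length ≤ u.length ∧
    ∀ j < v.length, u[i + j]? = some none ∨ u[i + j]? = (v[j]?).map some

/-- `u` is a linear universal partial word (upword) for `A^n`, `A = Fin α`:
every word of length `n` over `A` appears exactly once as a factor. -/
def IsLinearUpword (α n : ℕ) (u : List (PSym α)) : Prop :=
  ∀ v : List (Fin α), v.length = n → ∃! i : ℕ, MatchAt u v i

/-- `v` appears as a cyclic factor of the partial word `u` at position `i`
(indices taken modulo `u.length`). -/
def CycMatchAt {α : ℕ} (u : List (PSym α)) (v : List (Fin α)) (i : ℕ) : Prop :=
  ∀ j < v.length,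
    u[(i + j) % u.length]? = some none ∨ u[(i + j) % u.length]? = (v[j]?).map some

/-- `u` is a cyclic universal partial word for `A^n`: every word of length `n` over `A`
appears exactly once as a cyclic factor. -/
def IsCyclicUpword (α n : ℕ) (u : List (PSym α)) : Prop :=
  ∀ v : List (Fin α), v.length = n → ∃! i : ℕ, i < u.length ∧ CycMatchAt u v i

/-! ### Auxiliary lemmas -/

lemma fin2_ne_succ : ∀ x : Fin 2, x ≠ x + 1 := by decide
lemma fin2_succ_succ : ∀ x : Fin 2, x + 1 + 1 = x := by decide

lemma four_mul_le_two_pow : ∀ m, 4 ≤ m → 4 * m ≤ 2 ^ m := by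
  intro m hm
  induction m, hm using Nat.le_induction with
  | base => norm_num
  | succ k hk ih =>
    rw [pow_succ]
    omega

lemma two_le_count {α} [BEq α] [LawfulBEq α] (a : α) :
    ∀ (l : List α) (i j : ℕ), i < j → l[i]? = some a → l[j]? = some a → 2 ≤ l.count a := by
  intro l
  induction l with
  | nil => intro i j _ h; simp at h
  | cons b t ih =>
    intro i j hij hi hj
    rcases Nat.eq_zero_or_pos i with rfl | hipos
    · simp at hi
      have hj' : t[j-1]? = some a := by
        rcases j with _ | j; · omega
        · simpa using hj
      have : a ∈ t := List.mem_of_getElem? hj'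
      have h1 : 1 ≤ t.count a := List.count_pos_iff.mpr this
      subst hi
      rw [List.count_cons_self]; omega
    · have hi' : t[i-1]? = some a := by
        rcases i with _ | i; · omega
        · simpa using hi
      have hj' : t[j-1]? = some a := by
        rcases j with _ | j; · omega
        · simpa using hj
      have := ih (i-1) (j-1) (by omega) hi' hj'
      have hc : t.count a ≤ (b :: t).count a := by
        rw [List.count_cons]; split <;> omega
      omega

lemma three_le_count {α} [BEq α] [LawfulBEq α] (a : α) :
    ∀ (l : List α) (i j k : ℕ), i < j → j < k → l[i]? = some a → l[j]? = some a →
      l[k]? = some a → 3 ≤ l.count a := by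
  intro l
  induction l with
  | nil => intro i j k _ _ h; simp at h
  | cons b t ih =>
    intro i j k hij hjk hi hj hk
    rcases Nat.eq_zero_or_pos i with rfl | hipos
    · simp at hi
      have hj' : t[j-1]? = some a := by
        rcases j with _ | j; · omega
        · simpa using hj
      have hk' : t[k-1]? = some a := by
        rcases k with _ | k; · omega
        · simpa using hk
      have h2 := two_le_count a t (j-1) (k-1) (by omega) hj' hk'
      subst hi
      rw [List.count_cons_self]; omega
    · have hi' : t[i-1]? = some a := by
        rcases i with _ | i; · omega
        · simpa using hi
      have hj' : t[j-1]? = some a := by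
        rcases j with _ | j; · omega
        · simpa using hj
      have hk' : t[k-1]? = some a := by
        rcases k with _ | k; · omega
        · simpa using hk
      have := ih (i-1) (j-1) (k-1) (by omega) (by omega) hi' hj' hk'
      have hc : t.count a ≤ (b :: t).count a := by
        rw [List.count_cons]; split <;> omega
      omega

/-! ### Counting bounds -/

section Bounds
variable {n : ℕ} {u : List (PSym 2)}

lemma length_ge (hu : IsLinearUpword 2 n u) : n ≤ u.length := by
  obtain ⟨i, hi, -⟩ := hu (List.replicate n 0) (by simp)
  have := hi.1
  simp at this
  omega

noncomputable def fill (u : List (PSym 2)) (i : ℕ) : ℕ → Fin 2 :=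
  fun k => ((u[i + k]?).getD (some 0)).getD 0

lemma matchAt_fill (u : List (PSym 2)) (i : ℕ) (hi : i + n ≤ u.length) :
    MatchAt u (List.ofFn (fun j : Fin n => fill u i j.val)) i := by
  constructor
  · simp; omega
  · intro j hj
    simp only [List.length_ofFn] at hj
    have hjL : i + j < u.length := by omega
    obtain ⟨s, hs⟩ : ∃ s, u[i + j]? = some s := ⟨_, List.getElem?_eq_getElem hjL⟩
    rcases s with - | c
    · left; exact hs
    · right
      rw [hs, List.getElem?_ofFn]
      simp [List.ofFnNthVal, hj, fill, hs]

lemma upper_bound (hu : IsLinearUpword 2 n u) : u.length + 1 ≤ 2 ^ n + n := by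
  classical
  have hLn := length_ge hu
  have hinj : Set.InjOn (fun i => (fun j : Fin n => fill u i j.val))
      (Finset.range (u.length + 1 - n)) := by
    intro i hi i' hi' hf
    simp only [Finset.coe_range, Set.mem_Iio] at hi hi'
    have h1 := matchAt_fill u i (n := n) (by omega)
    have h2 := matchAt_fill u i' (n := n) (by omega)
    rw [show (List.ofFn fun j : Fin n => fill u i j.val)
        = List.ofFn fun j : Fin n => fill u i' j.val from congrArg List.ofFn hf] at h1
    exact (hu _ (by simp)).unique h1 h2
  have := Finset.card_le_card_of_injOn _ (fun x _ => Finset.mem_univ _) hinj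
  simp only [Finset.card_range, Finset.card_univ] at this
  rw [Fintype.card_fun] at this
  simp at this
  omega

lemma lower_bound (hu : IsLinearUpword 2 n u) (p : ℕ)
    (honly : ∀ k, u[k]? = some none → k = p ∨ k = p + 1) :
    2 ^ n ≤ 4 * (u.length + 1 - n) := by
  classical
  have hLn := length_ge hu
  have hex : ∀ f : Fin n → Fin 2, ∃ i, MatchAt u (List.ofFn f) i :=
    fun f => (hu _ (by simp)).exists
  choose ι hι using hex
  set fget : (Fin n → Fin 2) → ℕ → Fin 2 :=
    fun f k => if h : k < n then f ⟨k, h⟩ else 0 with hfget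
  set Φ : (Fin n → Fin 2) → ℕ × (Fin 2 × Fin 2) := fun f =>
    (ι f, (fget f (p - ι f), fget f (p + 1 - ι f))) with hΦ
  have hbd : ∀ f, ι f + n ≤ u.length := by
    intro f
    have := (hι f).1; simpa using this
  have hmem : ∀ f ∈ (Finset.univ : Finset (Fin n → Fin 2)),
      Φ f ∈ (Finset.range (u.length + 1 - n)) ×ˢ (Finset.univ : Finset (Fin 2 × Fin 2)) := by
    intro f _
    have := hbd f
    simp only [hΦ, Finset.mem_product, Finset.mem_range, Finset.mem_univ, and_true]
    omega
  have hinj : Set.InjOn Φ (Finset.univ : Finset (Fin n → Fin 2)) := by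
    intro f _ g _ hfg
    simp only [hΦ, Prod.mk.injEq] at hfg
    obtain ⟨hi, hd1, hd2⟩ := hfg
    rw [← hi] at hd1 hd2
    funext j
    have hjL : ι f + j.val < u.length := by have := hbd f; omega
    obtain ⟨s, hs⟩ : ∃ s, u[ι f + j.val]? = some s := ⟨_, List.getElem?_eq_getElem hjL⟩
    have hf2 := (hι f).2 j.val (by simp)
    have hg2 := (hι g).2 j.val (by simp)
    rw [← hi] at hg2
    rw [hs] at hf2 hg2
    rcases s with - | c
    · rcases honly _ hs with hpp | hpp
      · have hjval : (j : ℕ) = p - ι f := by omega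
        have h1 : fget f (p - ι f) = f j := by
          rw [hfget]; simp only [← hjval]; simp
        have h2 : fget g (p - ι f) = g j := by
          rw [hfget]; simp only [← hjval]; simp
        rw [← h1, ← h2, hd1]
      · have hjval : (j : ℕ) = p + 1 - ι f := by omega
        have h1 : fget f (p + 1 - ι f) = f j := by
          rw [hfget]; simp only [← hjval]; simp
        have h2 : fget g (p + 1 - ι f) = g j := by
          rw [hfget]; simp only [← hjval]; simp
        rw [← h1, ← h2, hd2]
    · rcases hf2 with h | h
      · simp at h
      · rcases hg2 with h' | h'
        · simp at h'
        · rw [List.getElem?_ofFn] at h h'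
          simp [List.ofFnNthVal, j.isLt] at h h'
          rw [← h, ← h']
  have hcard := Finset.card_le_card_of_injOn Φ hmem hinj
  rw [Finset.card_product, Finset.card_univ, Finset.card_univ, Fintype.card_fun] at hcard
  simp only [Fintype.card_fin, Finset.card_range] at hcard
  have : Fintype.card (Fin 2 × Fin 2) = 4 := by simp
  rw [this] at hcard
  omega
end Bounds

/-! ### Reversal -/

section Reverse
variable {α : ℕ}

lemma matchAt_reverse {u : List (PSym α)} {v : List (Fin α)} {i : ℕ}
    (h : MatchAt u v i) : MatchAt u.reverse v.reverse (u.length - v.length - i) := by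
  obtain ⟨h1, h2⟩ := h
  constructor
  · simp; omega
  · intro j hj
    simp only [List.length_reverse] at hj
    have hk : u.length - v.length - i + j < u.length := by omega
    have e1 : u.reverse[u.length - v.length - i + j]? = u[i + (v.length - 1 - j)]? := by
      rw [List.getElem?_reverse hk]
      congr 1
      omega
    have e2 : v.reverse[j]? = v[v.length - 1 - j]? := by
      rw [List.getElem?_reverse (by omega)]
    rw [e1, e2]
    exact h2 (v.length - 1 - j) (by omega)

lemma upword_reverse {n : ℕ} {u : List (PSym α)}
    (hu : IsLinearUpword α n u) : IsLinearUpword α n u.reverse := by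
  intro v hv
  obtain ⟨i, hi, huniq⟩ := hu v.reverse (by simpa using hv)
  have hb := hi.1
  simp only [List.length_reverse] at hb
  refine ⟨u.length - n - i, ?_, ?_⟩
  · have := matchAt_reverse hi
    simpa [hv, List.length_reverse] using this
  · intro j hj
    have hbj := hj.1
    simp only [List.length_reverse, hv] at hbj
    have := matchAt_reverse hj
    simp only [List.reverse_reverse, List.length_reverse, hv] at this
    have heq := huniq _ this
    omega
end Reverse

/-! ### Decidability bridge -/

instance {α} (u : List (PSym α)) (v : List (Fin α)) (i : ℕ) : Decidable (MatchAt u v i) := by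
  unfold MatchAt; infer_instance

def QC (u : List (PSym 2)) (v : List (Fin 2)) : Prop :=
  ((List.range (u.length + 1)).countP (fun i => decide (MatchAt u v i))) = 1

instance (u v) : Decidable (QC u v) := by unfold QC; infer_instance

lemma countP_le_one {β : Type*} (q : β → Bool) :
    ∀ (l : List β), l.Nodup → (∀ a ∈ l, ∀ b ∈ l, q a → q b → a = b) → l.countP q ≤ 1 := by
  intro l
  induction l with
  | nil => simp
  | cons b t ih =>
    intro hnd huq
    rw [List.countP_cons]
    rcases List.nodup_cons.mp hnd with ⟨hbt, hndt⟩
    by_cases hqb : q b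
    · have hzero : t.countP q = 0 := by
        rw [List.countP_eq_zero]
        intro a ha hqa
        exact hbt (huq a (by simp [ha]) b (by simp) hqa hqb ▸ ha)
      simp [hqb, hzero]
    · have := ih hndt (fun a ha c hc => huq a (by simp [ha]) c (by simp [hc]))
      simp [hqb]
      omega

lemma QC_of {n : ℕ} {u : List (PSym 2)} (hu : IsLinearUpword 2 n u) (hn : 1 ≤ n)
    (v : List (Fin 2)) (hv : v.length = n) : QC u v := by
  obtain ⟨i, hi, huniq⟩ := hu v hv
  have hb := hi.1
  rw [hv] at hb
  have hle : (List.range (u.length + 1)).countP (fun i => decide (MatchAt u v i)) ≤ 1 := by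
    apply countP_le_one _ _ List.nodup_range
    intro a _ b _ ha hb
    rw [decide_eq_true_iff] at ha hb
    rw [huniq a ha, huniq b hb]
  have hpos : 0 < (List.range (u.length + 1)).countP (fun i => decide (MatchAt u v i)) := by
    rw [List.countP_pos_iff]
    exact ⟨i, List.mem_range.mpr (by omega), decide_eq_true hi⟩
  unfold QC
  omega

def words2 : List (List (Fin 2)) := [[0,0],[0,1],[1,0],[1,1]]

def words3 : List (List (Fin 2)) :=
  [[0,0,0],[0,0,1],[0,1,0],[0,1,1],[1,0,0],[1,0,1],[1,1,0],[1,1,1]]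

lemma words2_len : ∀ v ∈ words2, v.length = 2 := by decide
lemma words3_len : ∀ v ∈ words3, v.length = 3 := by decide

set_option maxRecDepth 40000 in
lemma dec2 : ∀ m, m ≤ 3 → ∀ f : Fin m → Fin 2,
    (∀ v ∈ words2, QC ([none, none] ++ (List.ofFn f).map some) v) →
    (List.ofFn f).map (some : Fin 2 → PSym 2) = [] := by decide

set_option maxRecDepth 40000 in
lemma dec3 : ∀ m, m ≤ 6 → ∀ f : Fin m → Fin 2, ∀ g : Fin 2,
    (∀ v ∈ words3, QC ([none, none, some g, some (g+1)] ++ (List.ofFn f).map some) v) →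
    (([none, none, some g, some (g+1)] ++ (List.ofFn f).map some
        = [none, none, some 0, some 1, some 1, some 1]) ∨
     ([none, none, some g, some (g+1)] ++ (List.ofFn f).map some
        = [none, none, some 1, some 0, some 0, some 0])) := by decide

lemma ext_from (u : List (PSym 2)) (pre : List (PSym 2))
    (hpre : ∀ k < pre.length, u[k]? = pre[k]?)
    (hrest : ∀ k, pre.length ≤ k → k < u.length →
      u[k]? = some (some (((u[k]?).getD (some 0)).getD 0))) :
    u = pre ++ ((u.drop pre.length).map (fun s => ((s.getD 0) : Fin 2))).map some := by
  apply List.ext_getElem?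
  intro i
  by_cases h1 : i < pre.length
  · rw [List.getElem?_append_left h1]
    exact hpre i h1
  · push_neg at h1
    rw [List.getElem?_append_right (by simpa using h1)]
    by_cases h2 : i < u.length
    · rw [List.getElem?_map, List.getElem?_map, List.getElem?_drop]
      have he : pre.length + (i - pre.length) = i := by omega
      rw [he]
      have := hrest i h1 h2
      rw [this]
      simp
    · push_neg at h2
      rw [List.getElem?_eq_none (by omega)]
      rw [List.getElem?_eq_none]
      simp
      omega
/-! ### The structural steps -/

section Steps
variable {n : ℕ} {u : List (PSym 2)}

lemma ofn_getElem? : ∀ (g : Fin n → Fin 2) (j : ℕ) (hj : j < n),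
    (List.ofFn g)[j]? = some (g ⟨j, hj⟩) := by
  intro g j hj
  rw [List.getElem?_ofFn]
  simp [List.ofFnNthVal, hj]

/-- Step 3: the diamonds must be at the very start, and moreover every word of the
form `b z₁ … z_{n-2} (z_{n-1}+1)` matches the word at position 0. -/
lemma diamonds_at_start (hu : IsLinearUpword 2 n u) (hn : 2 ≤ n) (p : ℕ)
    (hp : u[p]? = some none) (hp1 : u[p+1]? = some none)
    (honly : ∀ k, u[k]? = some none → k = p ∨ k = p + 1)
    (z : ℕ → Fin 2)
    (hz : ∀ j, 1 ≤ j → p + 1 + j < u.length → u[p+1+j]? = some (some (z j)))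
    (hCase : p + n + 1 ≤ u.length) :
    p = 0 ∧ ∀ b : Fin 2, MatchAt u
      (List.ofFn (fun j : Fin n => if j.val = 0 then b else if j.val = n-1
        then z (n-1) + 1 else z j.val)) 0 := by
  set L := u.length with hLdef
  set d : Fin 2 := z (n-1) + 1 with hddef
  -- the window at p matches all words a b z₁ … z_{n-2}
  set W : Fin 2 → Fin 2 → List (Fin 2) := fun a b =>
    List.ofFn (fun j : Fin n => if j.val = 0 then a else if j.val = 1 then b
      else z (j.val - 1)) with hWdef
  have MA : ∀ a b, MatchAt u (W a b) p := by
    intro a b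
    constructor
    · simp [hWdef]; omega
    · intro j hj
      simp only [hWdef, List.length_ofFn] at hj
      rcases Nat.lt_or_ge j 2 with hj2 | hj2
      · interval_cases j
        · left; simpa using hp
        · left; simpa using hp1
      · right
        have hij : p + j = p + 1 + (j - 1) := by omega
        rw [hij, hz (j-1) (by omega) (by omega), ofn_getElem? _ j hj]
        simp only [Option.map_some]
        congr 2
        have : ¬ (j = 0) := by omega
        have h1 : ¬ (j = 1) := by omega
        simp [this, h1]
  -- the V words
  set V : Fin 2 → List (Fin 2) := fun b =>
    List.ofFn (fun j : Fin n => if j.val = 0 then b else if j.val = n-1 then d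
      else z j.val) with hVdef
  have hVm : ∀ b, MatchAt u (V b) 0 := by
    intro b
    obtain ⟨i, hi, -⟩ := hu (V b) (by simp [hVdef])
    suffices hi0 : i = 0 by rwa [hi0] at hi
    by_contra hne
    have hibd : i + n ≤ L := by simpa [hVdef] using hi.1
    have hne1 : i ≠ p + 1 := by
      intro hip
      have h2 := hi.2 (n-1) (by simp [hVdef]; omega)
      rw [hip, ofn_getElem? _ (n-1) (by omega)] at h2
      have hidx : p + 1 + (n - 1) < L := by omega
      rw [hz (n-1) (by omega) hidx] at h2
      simp only [Option.map_some] at h2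
      rcases h2 with h | h
      · exact absurd (Option.some.inj h) (by simp)
      · have : z (n-1) = d := by
          have := Option.some.inj (Option.some.inj h)
          simpa [show ¬((n-1) = 0) from by omega] using this
        exact fin2_ne_succ _ (hddef ▸ this)
    have hige : 1 ≤ i := by omega
    have hi1L : i - 1 < L := by omega
    obtain ⟨s, hs⟩ : ∃ s, u[i-1]? = some s := ⟨_, List.getElem?_eq_getElem hi1L⟩
    set a : Fin 2 := s.getD 0 with hadef
    have hWm : MatchAt u (W a b) (i - 1) := by
      constructor
      · simp [hWdef]; omega
      · intro j hj
        simp only [hWdef, List.length_ofFn] at hj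
        rcases Nat.eq_zero_or_pos j with rfl | hjpos
        · rcases s with - | c
          · left; simpa using hs
          · right
            rw [ofn_getElem? _ 0 (by omega)]
            simpa [hadef] using hs
        · have h2 := hi.2 (j-1) (by simp [hVdef]; omega)
          have hij : i - 1 + j = i + (j - 1) := by omega
          rw [hij]
          rcases h2 with h | h
          · left; exact h
          · right
            rw [h, ofn_getElem? _ (j-1) (by omega), ofn_getElem? _ j hj]
            simp only [Option.map_some]
            congr 2
            have e0 : ¬ (j = 0) := by omega
            by_cases e1 : j = 1
            · simp [hVdef, hWdef, e1]
            · have h2' : ¬ (j - 1 = 0) := by omega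
              have h3 : ¬ (j - 1 = n - 1) := by omega
              simp [hVdef, hWdef, e0, e1, h2', h3]
    have := (hu (W a b) (by simp [hWdef])).unique (MA a b) hWm
    exact hne1 (by omega)
  have hp0 : p = 0 := by
    have h0 := (hVm 0).2 0 (by simp [hVdef]; omega)
    have h1 := (hVm 1).2 0 (by simp [hVdef]; omega)
    rw [ofn_getElem? _ 0 (by omega)] at h0 h1
    simp only [Nat.zero_add, Option.map_some] at h0 h1
    rcases h0 with h0 | h0
    · rcases honly 0 h0 with e | e <;> omega
    · rcases h1 with h1 | h1
      · rcases honly 0 h1 with e | e <;> omega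
      · rw [h0] at h1
        have := Option.some.inj (Option.some.inj h1)
        simp at this
  exact ⟨hp0, hVm⟩

/-- Step 4: the letters `z₁, …, z_{n-2}` are all equal to `d = z_{n-1}+1`. -/
lemma letters_const (hn3 : 3 ≤ n) (hLn : n ≤ u.length)
    (z : ℕ → Fin 2)
    (hz : ∀ j, 1 ≤ j → 1 + j < u.length → u[1+j]? = some (some (z j)))
    (hV0 : MatchAt u
      (List.ofFn (fun j : Fin n => if j.val = 0 then (0 : Fin 2) else if j.val = n-1
        then z (n-1) + 1 else z j.val)) 0) :
    ∀ j, 1 ≤ j → j ≤ n - 2 → z j = z (n-1) + 1 := by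
  set d : Fin 2 := z (n-1) + 1 with hddef
  have hval : ∀ j, 2 ≤ j → j < n → u[j]? = some (some (z (j-1))) := by
    intro j h2 hjn
    have h := hz (j-1) (by omega) (by omega)
    rwa [show 1 + (j-1) = j from by omega] at h
  have hchain : ∀ j, 2 ≤ j → j ≤ n - 2 → z j = z (j - 1) := by
    intro j h2 hj2
    have h := hV0.2 j (by simp; omega)
    rw [Nat.zero_add] at h
    rw [hval j h2 (by omega)] at h
    rw [ofn_getElem? _ j (by omega)] at h
    simp only [Option.map_some] at h
    rcases h with h | h
    · exact absurd (Option.some.inj h) (by simp)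
    · have := Option.some.inj (Option.some.inj h)
      have e0 : ¬ (j = 0) := by omega
      have e1 : ¬ (j = n - 1) := by omega
      rw [if_neg e0, if_neg e1] at this
      exact this.symm
  have hlast : z (n-2) = d := by
    have h := hV0.2 (n-1) (by simp; omega)
    rw [Nat.zero_add] at h
    rw [hval (n-1) (by omega) (by omega)] at h
    rw [ofn_getElem? _ (n-1) (by omega)] at h
    simp only [Option.map_some] at h
    rcases h with h | h
    · exact absurd (Option.some.inj h) (by simp)
    · have := Option.some.inj (Option.some.inj h)
      have h3 : z (n - 1 - 1) = d := by
        simpa [show ¬(n - 1 = 0) from by omega] using this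
      rwa [show n - 1 - 1 = n - 2 from by omega] at h3
  have haux : ∀ t, t ≤ n - 3 → z (n-2-t) = d := by
    intro t
    induction t with
    | zero => intro _; simpa using hlast
    | succ k ih =>
      intro hk
      have e : n - 2 - (k+1) = (n - 2 - k) - 1 := by omega
      rw [e]
      rw [← hchain (n-2-k) (by omega) (by omega)]
      exact ih (by omega)
  intro j h1 h2
  have := haux (n-2-j) (by omega)
  rwa [show n-2-(n-2-j) = j from by omega] at this

/-- Step 5: for `n ≥ 4` we obtain a contradiction. -/
lemma step5_false (hu : IsLinearUpword 2 n u) (h4 : 4 ≤ n)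
    (hp1 : u[1]? = some none)
    (honly : ∀ k, u[k]? = some none → k = 0 ∨ k = 1)
    (z : ℕ → Fin 2)
    (hz : ∀ j, 1 ≤ j → 1 + j < u.length → u[1+j]? = some (some (z j)))
    (d : Fin 2)
    (hzall : ∀ j, 1 ≤ j → j ≤ n - 2 → z j = d)
    (hzlast : z (n-1) = d + 1)
    (hL2 : n + 2 ≤ u.length) : False := by
  set L := u.length with hLdef
  set e : Fin 2 := z n + 1 with hedef
  set H : List (Fin 2) := List.ofFn (fun m : Fin n =>
    if m.val + 3 ≤ n then d else if m.val = n-2 then d+1 else e) with hHdef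
  obtain ⟨j, hj, -⟩ := hu H (by simp [hHdef])
  have hjbd : j + n ≤ L := by simpa [hHdef] using hj.1
  have hHval : ∀ m (hm : m < n), H[m]? =
      some (if m + 3 ≤ n then d else if m = n-2 then d+1 else e) := by
    intro m hm
    rw [hHdef, ofn_getElem? _ m hm]
  rcases j with _ | _ | _ | j'
  · -- j = 0 : offset n-2 gives d = d+1
    have h2 := hj.2 (n-2) (by simp [hHdef]; omega)
    have hidx : (0:ℕ) + (n-2) = 1 + (n-3) := by omega
    rw [hidx, hz (n-3) (by omega) (by omega)] at h2
    rw [hHval (n-2) (by omega)] at h2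
    simp only [Option.map_some] at h2
    rcases h2 with h | h
    · exact absurd (Option.some.inj h) (by simp)
    · have := Option.some.inj (Option.some.inj h)
      have h3 : z (n-3) = d + 1 := by
        simpa [show ¬(n - 2 + 3 ≤ n) from by omega] using this
      rw [hzall (n-3) (by omega) (by omega)] at h3
      exact fin2_ne_succ d h3
  · -- j = 1 : offset n-2 gives d = d+1
    have h2 := hj.2 (n-2) (by simp [hHdef]; omega)
    have hidx : (1:ℕ) + (n-2) = 1 + (n-2) := rfl
    rw [hz (n-2) (by omega) (by omega)] at h2
    rw [hHval (n-2) (by omega)] at h2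
    simp only [Option.map_some] at h2
    rcases h2 with h | h
    · exact absurd (Option.some.inj h) (by simp)
    · have := Option.some.inj (Option.some.inj h)
      have h3 : z (n-2) = d + 1 := by
        simpa [show ¬(n - 2 + 3 ≤ n) from by omega] using this
      rw [hzall (n-2) (by omega) (by omega)] at h3
      exact fin2_ne_succ d h3
  · -- j = 2 : offset n-1 gives z n = z n + 1
    have h2 := hj.2 (n-1) (by simp [hHdef]; omega)
    have hidx : (2:ℕ) + (n-1) = 1 + n := by omega
    rw [hidx, hz n (by omega) (by omega)] at h2
    rw [hHval (n-1) (by omega)] at h2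
    simp only [Option.map_some] at h2
    rcases h2 with h | h
    · exact absurd (Option.some.inj h) (by simp)
    · have := Option.some.inj (Option.some.inj h)
      have h3 : z n = e := by
        simpa [show ¬(n - 1 + 3 ≤ n) from by omega,
          show ¬(n - 1 = n - 2) from by omega] using this
      rw [hedef] at h3
      exact fin2_ne_succ (z n) h3
  · -- j = j' + 3 : the word w' matches at 1 and at j'+2
    set w' : List (Fin 2) := List.ofFn (fun m : Fin n =>
      if m.val = 0 then z (j'+1) else if m.val + 1 ≤ n - 1 then d else d + 1) with hwdef
    have hw1 : MatchAt u w' 1 := by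
      constructor
      · simp [hwdef]; omega
      · intro m hm
        simp only [hwdef, List.length_ofFn] at hm
        rcases Nat.eq_zero_or_pos m with rfl | hmpos
        · left; simpa using hp1
        · right
          rw [hz m (by omega) (by omega), ofn_getElem? _ m hm]
          simp only [Option.map_some]
          congr 2
          have e0 : ¬ (m = 0) := by omega
          by_cases hmt : m + 1 ≤ n - 1
          · rw [if_neg e0, if_pos hmt]
            exact hzall m (by omega) (by omega)
          · rw [if_neg e0, if_neg hmt]
            have : m = n - 1 := by omega
            rw [this]
            exact hzlast
    have hwj : MatchAt u w' (j' + 2) := by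
      constructor
      · simp [hwdef]; omega
      · intro m hm
        simp only [hwdef, List.length_ofFn] at hm
        rcases Nat.eq_zero_or_pos m with rfl | hmpos
        · right
          have hidx : j' + 2 + 0 = 1 + (j' + 1) := by omega
          rw [hidx, hz (j'+1) (by omega) (by omega), ofn_getElem? _ 0 (by omega)]
          simp
        · have h2 := hj.2 (m-1) (by simp [hHdef]; omega)
          have hidx : j' + 2 + m = j' + 3 + (m - 1) := by omega
          rw [hidx]
          rcases h2 with h | h
          · rcases honly _ h with e' | e' <;> omega
          · right
            rw [h, hHval (m-1) (by omega), ofn_getElem? _ m hm]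
            simp only [Option.map_some]
            congr 2
            have e0 : ¬ (m = 0) := by omega
            by_cases hmt : m + 1 ≤ n - 1
            · rw [if_neg e0, if_pos hmt, if_pos (by omega)]
            · rw [if_neg e0, if_neg hmt, if_neg (by omega), if_pos (by omega)]
    have := (hu w' (by simp [hwdef])).unique hw1 hwj
    omega
end Steps

/-! ### The main classification for a "right-heavy" upword -/

theorem subMain (n : ℕ) (hn : 2 ≤ n) (u : List (PSym 2)) (hu : IsLinearUpword 2 n u)
    (hc : u.count (none : PSym 2) = 2) (p : ℕ)
    (hp : u[p]? = some none) (hp1 : u[p+1]? = some none)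
    (hbal : p + p + 2 ≤ u.length) :
    (n = 2 ∧ u = [none, none]) ∨
    (n = 3 ∧ (u = [none, none, some 0, some 1, some 1, some 1] ∨
              u = [none, none, some 1, some 0, some 0, some 0])) := by
  have hpL : p + 1 < u.length := (List.getElem?_eq_some_iff.mp hp1).1
  have honly : ∀ k, u[k]? = some none → k = p ∨ k = p + 1 := by
    intro k hk
    by_contra hcon
    push_neg at hcon
    obtain ⟨h1, h2⟩ := hcon
    have h3 : 3 ≤ u.count (none : PSym 2) := by
      rcases Nat.lt_or_ge k p with hlt | hge
      · exact three_le_count none u k p (p+1) hlt (by omega) hk hp hp1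
      · exact three_le_count none u p (p+1) k (by omega) (by omega) hp hp1 hk
    omega
  have hlet : ∀ k, k < u.length → k ≠ p → k ≠ p+1 →
      u[k]? = some (some (((u[k]?).getD (some 0)).getD 0)) := by
    intro k hk h1 h2
    obtain ⟨s, hs⟩ : ∃ s, u[k]? = some s := ⟨_, List.getElem?_eq_getElem hk⟩
    rcases s with - | c
    · rcases honly k hs with e | e
      · exact absurd e h1
      · exact absurd e h2
    · rw [hs]; simp
  have hLn : n ≤ u.length := length_ge hu
  have hUB : u.length + 1 ≤ 2^n + n := upper_bound hu
  have hLB : 2^n ≤ 4 * (u.length + 1 - n) := lower_bound hu p honly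
  set zf : ℕ → Fin 2 := fun j => (((u[p+1+j]?).getD (some 0)).getD 0) with hzfdef
  by_cases hCase : p + n + 1 ≤ u.length
  · -- Case I : at least n-1 letters to the right of the diamonds
    have hz : ∀ j, 1 ≤ j → p + 1 + j < u.length → u[p+1+j]? = some (some (zf j)) := by
      intro j hj hjL
      exact hlet _ hjL (by omega) (by omega)
    obtain ⟨hp0, hVm⟩ := diamonds_at_start hu hn p hp hp1 honly zf hz hCase
    subst hp0
    have hz1 : ∀ j, 1 ≤ j → 1 + j < u.length → u[1+j]? = some (some (zf j)) := by
      intro j h1 h2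
      have := hz j h1 (by omega)
      simpa using this
    by_cases h4 : 4 ≤ n
    · -- n ≥ 4 : contradiction
      exfalso
      have hzall := letters_const (u := u) (by omega) hLn zf hz1 (hVm 0)
      have hzlast : zf (n-1) = (zf (n-1) + 1) + 1 := (fin2_succ_succ _).symm
      have hpow := four_mul_le_two_pow n h4
      have hL2 : n + 2 ≤ u.length := by omega
      exact step5_false hu h4 (by simpa using hp1) (by simpa using honly)
        zf hz1 (zf (n-1) + 1) hzall hzlast hL2
    · -- n = 2 or n = 3
      interval_cases n
      · -- n = 2
        left
        refine ⟨rfl, ?_⟩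
        have hpre : ∀ k < ([none, none] : List (PSym 2)).length,
            u[k]? = ([none, none] : List (PSym 2))[k]? := by
          intro k hk
          simp only [List.length_cons, List.length_nil] at hk
          interval_cases k
          · rw [hp]; rfl
          · rw [hp1]; rfl
        have hrest : ∀ k, ([none, none] : List (PSym 2)).length ≤ k → k < u.length →
            u[k]? = some (some (((u[k]?).getD (some 0)).getD 0)) := by
          intro k hk hkL
          simp only [List.length_cons, List.length_nil] at hk
          exact hlet k hkL (by omega) (by omega)
        have hEq := ext_from u [none, none] hpre hrest
        set r : List (Fin 2) :=
          (u.drop ([none, none] : List (PSym 2)).length).map (fun s => ((s.getD 0) : Fin 2))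
          with hrdef
        have hrlen : r.length ≤ 3 := by
          rw [hrdef]
          simp
          omega
        have hofr : List.ofFn (fun i : Fin r.length => r[i]) = r := List.ofFn_getElem
        have hQ : ∀ v ∈ words2, QC u v := fun v hv => QC_of hu (by omega) v (words2_len v hv)
        rw [hEq] at hQ
        have hdec := dec2 r.length hrlen (fun i => r[i]) (by rw [hofr]; exact hQ)
        rw [hofr] at hdec
        rw [hEq, hdec]
        rfl
      · -- n = 3
        right
        refine ⟨rfl, ?_⟩
        have hzall := letters_const (u := u) (by omega) hLn zf hz1 (hVm 0)
        -- zf 1 = zf 2 + 1  and so  zf 2 = zf 1 + 1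
        have hg1 : zf 1 = zf 2 + 1 := by
          have := hzall 1 (by omega) (by omega)
          simpa using this
        have hg2 : zf 2 = zf 1 + 1 := by
          rw [hg1, fin2_succ_succ]
        set g : Fin 2 := zf 1 with hgdef
        have hpre : ∀ k < ([none, none, some g, some (g+1)] : List (PSym 2)).length,
            u[k]? = ([none, none, some g, some (g+1)] : List (PSym 2))[k]? := by
          intro k hk
          simp only [List.length_cons, List.length_nil] at hk
          interval_cases k
          · rw [hp]; rfl
          · rw [hp1]; rfl
          · have := hz1 1 (by omega) (by omega)
            rw [show (1:ℕ) + 1 = 2 from rfl] at this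
            rw [this]; rfl
          · have := hz1 2 (by omega) (by omega)
            rw [show (1:ℕ) + 2 = 3 from rfl] at this
            rw [this, hg2]; rfl
        have hrest : ∀ k, ([none, none, some g, some (g+1)] : List (PSym 2)).length ≤ k →
            k < u.length → u[k]? = some (some (((u[k]?).getD (some 0)).getD 0)) := by
          intro k hk hkL
          simp only [List.length_cons, List.length_nil] at hk
          exact hlet k hkL (by omega) (by omega)
        have hEq := ext_from u [none, none, some g, some (g+1)] hpre hrest
        set r : List (Fin 2) :=
          (u.drop ([none, none, some g, some (g+1)] : List (PSym 2)).length).map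
            (fun s => ((s.getD 0) : Fin 2)) with hrdef
        have hrlen : r.length ≤ 6 := by
          rw [hrdef]
          simp
          omega
        have hofr : List.ofFn (fun i : Fin r.length => r[i]) = r := List.ofFn_getElem
        have hQ : ∀ v ∈ words3, QC u v := fun v hv => QC_of hu (by omega) v (words3_len v hv)
        rw [hEq] at hQ
        have hdec := dec3 r.length hrlen (fun i => r[i]) g (by rw [hofr]; exact hQ)
        rw [hofr] at hdec
        rw [hEq]
        exact hdec
  · -- Case II : fewer than n-1 letters to the right
    push_neg at hCase
    have hn4 : ¬ (4 ≤ n) := by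
      intro h4
      have hpow := four_mul_le_two_pow n h4
      omega
    interval_cases n
    · -- n = 2 : u = [◊, ◊]
      left
      have hp0 : p = 0 := by omega
      subst hp0
      have hL2 : u.length = 2 := by omega
      refine ⟨rfl, ?_⟩
      apply List.ext_getElem?
      intro i
      match i with
      | 0 => rw [hp]; rfl
      | 1 => rw [hp1]; rfl
      | (i+2) =>
        rw [List.getElem?_eq_none (by omega)]
        rfl
    · -- n = 3 : u = [x, ◊, ◊, y], impossible
      exfalso
      have hp0 : p = 1 := by omega
      subst hp0
      have hL4 : u.length = 4 := by omega
      have hx := hlet 0 (by omega) (by omega) (by omega)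
      have hy := hlet 3 (by omega) (by omega) (by omega)
      set x : Fin 2 := ((u[0]?).getD (some 0)).getD 0 with hxdef
      set y : Fin 2 := ((u[3]?).getD (some 0)).getD 0 with hydef
      have m0 : MatchAt u [x, 0, y] 0 := by
        constructor
        · simp; omega
        · intro j hj
          simp only [List.length_cons, List.length_nil] at hj
          interval_cases j
          · right; rw [Nat.add_zero, hx]; rfl
          · left; exact hp
          · left; exact hp1
      have m1 : MatchAt u [x, 0, y] 1 := by
        constructor
        · simp; omega
        · intro j hj
          simp only [List.length_cons, List.length_nil] at hj
          interval_cases j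
          · left; rw [Nat.add_zero]; exact hp
          · left; exact hp1
          · right; rw [show (1:ℕ) + 2 = 3 from rfl, hy]; rfl
      have := (hu [x, 0, y] rfl).unique m0 m1
      omega

/-! ### The main theorem -/

/-- For `A = {0,1}` and `n ≥ 2`, the only linear upwords for `A^n`
containing exactly two `◊`s which are adjacent are, up to reversal and permuting the
letters `0` and `1`, the words `◊◊` (for `n = 2`) and `◊◊0111` (for `n = 3`). -/
theorem upword_adjacent_diamonds_classification (n : ℕ) (hn : 2 ≤ n)
    (u : List (PSym 2)) (hu : IsLinearUpword 2 n u)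
    (hc : u.count (none : PSym 2) = 2)
    (hadj : ∃ i, u[i]? = some none ∧ u[i + 1]? = some none) :
    (n = 2 ∧ u = [none, none]) ∨
    (n = 3 ∧
      (u = [none, none, some 0, some 1, some 1, some 1] ∨
       u = [none, none, some 0, some 1, some 1, some 1].reverse ∨
       u = [none, none, some 1, some 0, some 0, some 0] ∨
       u = [none, none, some 1, some 0, some 0, some 0].reverse)) := by
  obtain ⟨p, hp, hp1⟩ := hadj
  have hpL : p + 1 < u.length := (List.getElem?_eq_some_iff.mp hp1).1
  by_cases hbal : p + p + 2 ≤ u.length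
  · rcases subMain n hn u hu hc p hp hp1 hbal with ⟨h2, he⟩ | ⟨h3, he⟩
    · exact Or.inl ⟨h2, he⟩
    · rcases he with he | he
      · exact Or.inr ⟨h3, Or.inl he⟩
      · exact Or.inr ⟨h3, Or.inr (Or.inr (Or.inl he))⟩
  · -- work with the reversed word
    set w := u.reverse with hwdef
    have hw : IsLinearUpword 2 n w := upword_reverse hu
    have hwc : w.count (none : PSym 2) = 2 := by
      rw [hwdef, List.count_reverse]; exact hc
    set q := u.length - p - 2 with hqdef
    have hq : w[q]? = some none := by
      rw [hwdef, List.getElem?_reverse (by omega)]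
      rw [show u.length - 1 - q = p + 1 from by omega]
      exact hp1
    have hq1 : w[q+1]? = some none := by
      rw [hwdef, List.getElem?_reverse (by omega)]
      rw [show u.length - 1 - (q+1) = p from by omega]
      exact hp
    have hwbal : q + q + 2 ≤ w.length := by
      rw [hwdef, List.length_reverse]
      omega
    have hur : u = w.reverse := by rw [hwdef, List.reverse_reverse]
    rcases subMain n hn w hw hwc q hq hq1 hwbal with ⟨h2, he⟩ | ⟨h3, he⟩
    · refine Or.inl ⟨h2, ?_⟩
      rw [hur, he]
      rfl
    · rcases he with he | he
      · refine Or.inr ⟨h3, Or.inr (Or.inl ?_)⟩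
        rw [hur, he]
      · refine Or.inr ⟨h3, Or.inr (Or.inr (Or.inr ?_))⟩
        rw [hur, he]
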